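/- Any two admissible partitions Y and Z of C^s have a least upper bound in the poset 𝔄: there exists an admissible partition T with Y ≤ T and Z ≤ T such that every admissible partition S with Y ≤ S and Z ≤ S satisfies T ≤ S. In particular the poset 𝔄 is directed. -/

import Mathlib

namespace BrinThompson

/-- A finite binary word. -/
abbrev Word : Type := List Bool

/-- A box in `C^s`, recorded as the tuple of binary words whose cylinders form the product. -/
abbrev Box (s : ℕ) : Type := Fin s → Word

/-- The box obtained from `b` by replacing its `i`-th word `u` by `u ++ [bit]`. -/
def expandBox {s : ℕ} (i : Fin s) (bit : Bool) (b : Box s) : Box s :=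
  Function.update b i (b i ++ [bit])

/-- `B` is obtained from `A` by a simple expansion of colour `i`: one box of `A` is replaced by
its two halves in direction `i`. -/
def SimpleExpansionC {s : ℕ} (i : Fin s) (A B : Finset (Box s)) : Prop :=
  ∃ b ∈ A, B = insert (expandBox i false b) (insert (expandBox i true b) (A.erase b))

/-- `B` is obtained from `A` by a simple expansion of some colour. -/
def SimpleExpansion {s : ℕ} (A B : Finset (Box s)) : Prop :=
  ∃ i : Fin s, SimpleExpansionC i A B

/-- `Expands A B` (`A ≤ B`): `B` is a descendant of `A`, i.e. `B` is obtained from `A` by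
finitely many simple expansions. -/
def Expands {s : ℕ} (A B : Finset (Box s)) : Prop :=
  Relation.ReflTransGen SimpleExpansion A B

/-- The one-element partition `{C^s}`. -/
def trivialPartition (s : ℕ) : Finset (Box s) := {fun _ => []}

/-- An admissible partition of `C^s`. -/
def Admissible {s : ℕ} (A : Finset (Box s)) : Prop :=
  Expands (trivialPartition s) A

/-- `M = glb_A(Ω)`: the greatest lower bound of `Ω` above `A`. -/
def IsGlbAbove {s : ℕ} (A : Finset (Box s)) (Ω : Set (Finset (Box s)))
    (M : Finset (Box s)) : Prop :=
  Admissible M ∧ Expands A M ∧ (∀ B ∈ Ω, Expands M B) ∧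
    ∀ N : Finset (Box s), Admissible N → Expands A N → (∀ B ∈ Ω, Expands N B) → Expands N M

/-- The depth of a box: the total length of its defining words. -/
def depth {s : ℕ} (b : Box s) : ℕ := ∑ i, (b i).length

/-- `BoxLE m b`: the box `m` contains the box `b`, i.e. each word of `m` is a prefix of the
corresponding word of `b`. -/
def BoxLE {s : ℕ} (m b : Box s) : Prop := ∀ i, m i <+: b i

/-- A box `y ∈ Y` is locally maximal with respect to `A`: for the box `m` of `A` containing `y`,
every box `j ∈ Y` contained in `m` satisfies `l(A,j) ≤ l(A,y)`, i.e. `depth j ≤ depth y`. -/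
def LocallyMaximal {s : ℕ} (A Y : Finset (Box s)) (y : Box s) : Prop :=
  ∀ m ∈ A, BoxLE m y → ∀ j ∈ Y, BoxLE m j → depth j ≤ depth y

/-- There is an edge of colour `i` between `y, y' ∈ Y` in the graph `Γ_A`: some simple
contraction `Z` of `Y` of colour `i` with `A ≤ Z` merges exactly `y` and `y'`. -/
def GammaAdjC {s : ℕ} (A Y : Finset (Box s)) (i : Fin s) (y y' : Box s) : Prop :=
  y ≠ y' ∧ y ∈ Y ∧ y' ∈ Y ∧
    ∃ Z : Finset (Box s), Admissible Z ∧ SimpleExpansionC i Z Y ∧ Expands A Z ∧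
      Y \ Z = {y, y'}

/-- The graph `Γ_A` (with its colours forgotten). -/
def Gamma {s : ℕ} (A Y : Finset (Box s)) : SimpleGraph (Box s) where
  Adj y y' := ∃ i : Fin s, GammaAdjC A Y i y y'
  symm := by
    refine ⟨?_⟩
    rintro y y' ⟨i, hne, hy, hy', Z, h1, h2, h3, h4⟩
    exact ⟨i, hne.symm, hy', hy, Z, h1, h2, h3, by rwa [Finset.pair_comm]⟩
  loopless := by refine ⟨?_⟩; rintro y ⟨i, hne, _⟩; exact hne rfl

/-- The geometric realization of the order complex (nerve) of the relation `le` on `P`: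
finitely supported probability densities on `P` whose support is a chain, topologised as a
subspace of `P → ℝ`. -/
abbrev OrderComplex (P : Type*) (le : P → P → Prop) : Type _ :=
  {f : P → ℝ // (Function.support f).Finite ∧ (∀ x, 0 ≤ f x) ∧
    IsChain le (Function.support f) ∧ ∑ᶠ x, f x = 1}

/-- A space is `t`-connected if it is nonempty, path-connected and its homotopy groups
`π_k` vanish for `1 ≤ k ≤ t`. -/
def TConnected (t : ℕ) (X : Type*) [TopologicalSpace X] : Prop :=
  Nonempty X ∧ PathConnectedSpace X ∧
    ∀ k : ℕ, 1 ≤ k → k ≤ t → ∀ x : X, Subsingleton (HomotopyGroup (Fin k) X x)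

section Aux

variable {s : ℕ}

/-- Two boxes intersect iff each pair of coordinate words is comparable. -/
def Compat (y z : Box s) : Prop := ∀ i, y i <+: z i ∨ z i <+: y i

lemma compat_refl (y : Box s) : Compat y y := fun _ => Or.inl (List.prefix_refl _)

lemma compat_symm {y z : Box s} (h : Compat y z) : Compat z y := fun i => (h i).symm

lemma boxLE_trans {a b c : Box s} (h1 : BoxLE a b) (h2 : BoxLE b c) : BoxLE a c :=
  fun i => (h1 i).trans (h2 i)

lemma compat_of_boxLE {y z : Box s} (h : BoxLE y z) : Compat y z := fun i => Or.inl (h i)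

lemma compat_of_common {y z x : Box s} (hy : BoxLE y x) (hz : BoxLE z x) : Compat y z :=
  fun i => List.prefix_or_prefix_of_prefix (hy i) (hz i)

lemma compat_mono {a x c : Box s} (h : BoxLE a x) (hc : Compat x c) : Compat a c := by
  intro i
  rcases hc i with h1 | h1
  · exact Or.inl ((h i).trans h1)
  · exact List.prefix_or_prefix_of_prefix (h i) h1

/-- The intersection of two compatible boxes: coordinatewise the longer word. -/
def joinBox (y z : Box s) : Box s := fun i => if (y i).length ≤ (z i).length then z i else y i

lemma boxLE_joinBox_left {y z : Box s} (h : Compat y z) : BoxLE y (joinBox y z) := by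
  intro i
  unfold joinBox
  split_ifs with hl
  · rcases h i with h1 | h1
    · exact h1
    · rw [h1.eq_of_length_le hl]
  · exact List.prefix_refl _

lemma boxLE_joinBox_right {y z : Box s} (h : Compat y z) : BoxLE z (joinBox y z) := by
  intro i
  unfold joinBox
  split_ifs with hl
  · exact List.prefix_refl _
  · rcases h i with h1 | h1
    · exact absurd h1.length_le hl
    · exact h1

lemma joinBox_comm {y z : Box s} (h : Compat y z) : joinBox y z = joinBox z y := by
  funext i
  rcases h i with h1 | h1
  · rw [joinBox, joinBox, if_pos h1.length_le]
    split_ifs with h3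
    · exact (h1.eq_of_length_le h3).symm
    · rfl
  · rw [joinBox, joinBox, if_pos h1.length_le]
    split_ifs with h3
    · exact h1.eq_of_length_le h3
    · rfl

lemma joinBox_of_boxLE {y z : Box s} (h : BoxLE y z) : joinBox y z = z := by
  funext i
  exact if_pos (h i).length_le

lemma boxLE_joinBox {y z x : Box s} (hy : BoxLE y x) (hz : BoxLE z x) :
    BoxLE (joinBox y z) x := by
  intro i
  unfold joinBox
  split_ifs
  · exact hz i
  · exact hy i

lemma boxLE_expandBox (i : Fin s) (ε : Bool) (b : Box s) : BoxLE b (expandBox i ε b) := by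
  intro k
  unfold expandBox
  rcases eq_or_ne k i with rfl | hk
  · rw [Function.update_self]
    exact List.prefix_append _ _
  · rw [Function.update_of_ne hk]

lemma compat_of_compat_expand {y b : Box s} {i : Fin s} {ε : Bool}
    (h : Compat y (expandBox i ε b)) : Compat y b := by
  intro k
  have hk := h k
  unfold expandBox at hk
  rcases eq_or_ne k i with rfl | hne
  · rw [Function.update_self] at hk
    rcases hk with h1 | h1
    · rcases List.prefix_concat_iff.mp h1 with h2 | h2
      · exact Or.inr (h2 ▸ List.prefix_append _ _)
      · exact Or.inl h2
    · exact Or.inr ((List.prefix_append _ _).trans h1)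
  · rwa [Function.update_of_ne hne] at hk

/-- The boxes of a partition are pairwise disjoint. -/
def PI (A : Finset (Box s)) : Prop := ∀ a ∈ A, ∀ b ∈ A, a ≠ b → ¬ Compat a b

lemma expandBox_ne {i : Fin s} {b : Box s} {ε δ : Bool} (h : ε ≠ δ) :
    ¬ Compat (expandBox i ε b) (expandBox i δ b) := by
  intro hc
  have hi := hc i
  unfold expandBox at hi
  rw [Function.update_self, Function.update_self] at hi
  have : (b i ++ [ε]) = (b i ++ [δ]) := by
    rcases hi with h1 | h1
    · exact h1.eq_of_length (by simp)
    · exact (h1.eq_of_length (by simp)).symm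
  exact h (by simpa using this)

lemma PI_step {A B : Finset (Box s)} (hA : PI A) (h : SimpleExpansion A B) : PI B := by
  obtain ⟨i, b, hb, rfl⟩ := h
  have key : ∀ ε : Bool, ∀ a ∈ A.erase b, ¬ Compat (expandBox i ε b) a := by
    intro ε a ha hc
    have ha' := Finset.mem_of_mem_erase ha
    have hne : a ≠ b := Finset.ne_of_mem_erase ha
    exact hA a ha' b hb hne (compat_of_compat_expand (compat_symm hc))
  intro x hx y hy hxy hc
  simp only [Finset.mem_insert] at hx hy
  rcases hx with rfl | rfl | hx <;> rcases hy with rfl | rfl | hy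
  · exact hxy rfl
  · exact expandBox_ne (by simp) hc
  · exact key false y hy hc
  · exact expandBox_ne (by simp) hc
  · exact hxy rfl
  · exact key true y hy hc
  · exact key false x hx (compat_symm hc)
  · exact key true x hx (compat_symm hc)
  · exact hA x (Finset.mem_of_mem_erase hx) y (Finset.mem_of_mem_erase hy) hxy hc

lemma PI_expands {A B : Finset (Box s)} (h : Expands A B) (hA : PI A) : PI B := by
  induction h with
  | refl => exact hA
  | tail _ h2 ih => exact PI_step ih h2

lemma PI_trivial : PI (trivialPartition s) := by
  intro a ha b hb hne
  rw [trivialPartition, Finset.mem_singleton] at ha hb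
  exact absurd (ha.trans hb.symm) hne

lemma adm_PI {A : Finset (Box s)} (h : Admissible A) : PI A := PI_expands h PI_trivial

lemma expands_boxLE {A B : Finset (Box s)} (h : Expands A B) :
    ∀ x ∈ B, ∃ a ∈ A, BoxLE a x := by
  induction h with
  | refl => exact fun x hx => ⟨x, hx, fun i => List.prefix_refl _⟩
  | tail _ h2 ih =>
    obtain ⟨i, b, hb, rfl⟩ := h2
    intro x hx
    simp only [Finset.mem_insert] at hx
    rcases hx with rfl | rfl | hx
    · obtain ⟨a, ha, hle⟩ := ih b hb
      exact ⟨a, ha, boxLE_trans hle (boxLE_expandBox i false b)⟩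
    · obtain ⟨a, ha, hle⟩ := ih b hb
      exact ⟨a, ha, boxLE_trans hle (boxLE_expandBox i true b)⟩
    · exact ih x (Finset.mem_of_mem_erase hx)

lemma glue {A B : Finset (Box s)} (C : Finset (Box s)) (h : Expands A B) :
    (∀ a ∈ A, ∀ c ∈ C, ¬ Compat a c) → Expands (A ∪ C) (B ∪ C) := by
  induction h using Relation.ReflTransGen.head_induction_on with
  | refl => exact fun _ => Relation.ReflTransGen.refl
  | head h1 _ ih =>
    intro hdis
    obtain ⟨i, b, hb, rfl⟩ := h1
    have hbC : b ∉ C := fun hbC => hdis b hb b hbC (compat_refl b)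
    refine Relation.ReflTransGen.head ⟨i, b, Finset.mem_union_left _ hb, ?_⟩ (ih ?_)
    · rw [Finset.erase_union_distrib, Finset.erase_eq_of_notMem hbC,
        ← Finset.insert_union, ← Finset.insert_union]
    · intro x hx c hc hcc
      simp only [Finset.mem_insert] at hx
      rcases hx with rfl | rfl | hx
      · exact hdis b hb c hc (compat_mono (boxLE_expandBox i false b) hcc)
      · exact hdis b hb c hc (compat_mono (boxLE_expandBox i true b) hcc)
      · exact hdis x (Finset.mem_of_mem_erase hx) c hc hcc

/-- The trace of the partition `A` on the box `y`. -/
noncomputable def traceOn (A : Finset (Box s)) (y : Box s) : Finset (Box s) :=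
  (@Finset.filter _ (fun b => Compat y b) (Classical.decPred _) A).image (joinBox y)

lemma mem_traceOn {A : Finset (Box s)} {y x : Box s} :
    x ∈ traceOn A y ↔ ∃ b ∈ A, Compat y b ∧ joinBox y b = x := by
  classical
  simp only [traceOn, Finset.mem_image, Finset.mem_filter]
  constructor
  · rintro ⟨b, ⟨hb, hcb⟩, rfl⟩
    exact ⟨b, hb, hcb, rfl⟩
  · rintro ⟨b, hb, hcb, rfl⟩
    exact ⟨b, ⟨hb, hcb⟩, rfl⟩

lemma joinBox_nil (y : Box s) : joinBox y (fun _ => ([] : Word)) = y := by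
  funext i
  rw [joinBox]
  split_ifs with h
  · exact (List.eq_nil_of_length_eq_zero (Nat.le_zero.mp (by simpa using h))).symm
  · rfl

lemma traceOn_trivial (y : Box s) : traceOn (trivialPartition s) y = {y} := by
  ext x
  rw [mem_traceOn, Finset.mem_singleton]
  constructor
  · rintro ⟨b, hb, _, rfl⟩
    rw [trivialPartition, Finset.mem_singleton] at hb
    subst hb
    exact joinBox_nil y
  · rintro rfl
    refine ⟨fun _ => [], by simp [trivialPartition], fun i => Or.inr List.nil_prefix, joinBox_nil _⟩

lemma traceOn_insert_pos {A : Finset (Box s)} {y c : Box s} (h : Compat y c) :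
    traceOn (insert c A) y = insert (joinBox y c) (traceOn A y) := by
  ext x
  rw [mem_traceOn, Finset.mem_insert, mem_traceOn]
  constructor
  · rintro ⟨b, hb, hcb, rfl⟩
    rcases Finset.mem_insert.mp hb with rfl | hb
    · exact Or.inl rfl
    · exact Or.inr ⟨b, hb, hcb, rfl⟩
  · rintro (rfl | ⟨b, hb, hcb, rfl⟩)
    · exact ⟨c, Finset.mem_insert_self _ _, h, rfl⟩
    · exact ⟨b, Finset.mem_insert_of_mem hb, hcb, rfl⟩

lemma traceOn_insert_neg {A : Finset (Box s)} {y c : Box s} (h : ¬ Compat y c) :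
    traceOn (insert c A) y = traceOn A y := by
  ext x
  rw [mem_traceOn, mem_traceOn]
  constructor
  · rintro ⟨b, hb, hcb, rfl⟩
    rcases Finset.mem_insert.mp hb with rfl | hb
    · exact absurd hcb h
    · exact ⟨b, hb, hcb, rfl⟩
  · rintro ⟨b, hb, hcb, rfl⟩
    exact ⟨b, Finset.mem_insert_of_mem hb, hcb, rfl⟩

lemma traceOn_erase_neg {A : Finset (Box s)} {y b : Box s} (h : ¬ Compat y b) :
    traceOn (A.erase b) y = traceOn A y := by
  ext x
  rw [mem_traceOn, mem_traceOn]
  constructor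
  · rintro ⟨c, hc, hcc, rfl⟩
    exact ⟨c, Finset.mem_of_mem_erase hc, hcc, rfl⟩
  · rintro ⟨c, hc, hcc, rfl⟩
    refine ⟨c, Finset.mem_erase.mpr ⟨?_, hc⟩, hcc, rfl⟩
    rintro rfl
    exact h hcc

lemma traceOn_erase {A : Finset (Box s)} (hA : PI A) {y b : Box s} (hb : b ∈ A)
    (hc : Compat y b) :
    traceOn (A.erase b) y = (traceOn A y).erase (joinBox y b) := by
  ext x
  rw [mem_traceOn, Finset.mem_erase, mem_traceOn]
  constructor
  · rintro ⟨z, hz, hcz, rfl⟩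
    have hzA := Finset.mem_of_mem_erase hz
    have hzb : z ≠ b := Finset.ne_of_mem_erase hz
    refine ⟨fun heq => hA z hzA b hb hzb ?_, z, hzA, hcz, rfl⟩
    exact compat_of_common (boxLE_joinBox_right hcz) (heq ▸ boxLE_joinBox_right hc)
  · rintro ⟨hne, z, hzA, hcz, rfl⟩
    refine ⟨z, Finset.mem_erase.mpr ⟨?_, hzA⟩, hcz, rfl⟩
    rintro rfl
    exact hne rfl

lemma mem_traceOn_self {A : Finset (Box s)} {y b : Box s} (hb : b ∈ A) (hc : Compat y b) :
    joinBox y b ∈ traceOn A y := mem_traceOn.mpr ⟨b, hb, hc, rfl⟩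

lemma traceOn_step {A B : Finset (Box s)} (hA : PI A) (h : SimpleExpansion A B) (y : Box s) :
    Expands (traceOn A y) (traceOn B y) := by
  obtain ⟨i, b, hb, rfl⟩ := h
  by_cases hc : Compat y b
  · by_cases hyb : y i <+: b i
    · -- genuine expansion
      have hcε : ∀ ε : Bool, Compat y (expandBox i ε b) := by
        intro ε k
        unfold expandBox
        rcases eq_or_ne k i with rfl | hne
        · rw [Function.update_self]
          exact Or.inl (hyb.trans (List.prefix_append _ _))
        · rw [Function.update_of_ne hne]
          exact hc k
      have hj : ∀ ε : Bool, joinBox y (expandBox i ε b) = expandBox i ε (joinBox y b) := by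
        intro ε
        funext k
        rcases eq_or_ne k i with rfl | hne
        · simp only [joinBox, expandBox, Function.update_self, List.length_append,
            List.length_singleton]
          rw [if_pos hyb.length_le, if_pos (Nat.le_succ_of_le hyb.length_le)]
        · simp only [joinBox, expandBox, Function.update_of_ne hne]
      rw [traceOn_insert_pos (hcε false), traceOn_insert_pos (hcε true),
        traceOn_erase hA hb hc, hj, hj]
      exact Relation.ReflTransGen.single ⟨i, joinBox y b, mem_traceOn_self hb hc, rfl⟩
    · -- the box `b` strictly contains `y` in coordinate `i`: the trace is unchanged
      have hbi : b i <+: y i := (hc i).resolve_left hyb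
      obtain ⟨t, ht⟩ := hbi
      cases t with
      | nil => exact absurd (by rw [← ht, List.append_nil]) hyb
      | cons ε t' =>
        have hεpre : b i ++ [ε] <+: y i := ⟨t', by rw [← ht]; simp⟩
        have hcε : Compat y (expandBox i ε b) := by
          intro k
          unfold expandBox
          rcases eq_or_ne k i with rfl | hne
          · rw [Function.update_self]
            exact Or.inr hεpre
          · rw [Function.update_of_ne hne]
            exact hc k
        have hcnε : ¬ Compat y (expandBox i (!ε) b) := by
          intro h'
          have hk := h' i
          unfold expandBox at hk
          rw [Function.update_self] at hk
          rcases hk with h1 | h1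
          · have hlen : (y i).length = (b i).length + 1 := by
              have := h1.length_le
              have := hεpre.length_le
              simp only [List.length_append, List.length_singleton] at *
              omega
            have he1 : y i = b i ++ [!ε] := h1.eq_of_length (by simp [hlen])
            have he2 : b i ++ [ε] = y i := hεpre.eq_of_length (by simp [hlen])
            have : ε = !ε := by
              have := he2.trans he1
              simpa using this
            simp at this
          · have : b i ++ [!ε] = b i ++ [ε] :=
              (List.prefix_of_prefix_length_le h1 hεpre (by simp)).eq_of_length (by simp)
            have : (!ε) = ε := by simpa using this
            simp at this
        have hjε : joinBox y (expandBox i ε b) = joinBox y b := by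
          funext k
          rcases eq_or_ne k i with rfl | hne
          · have hlen : (b k).length < (y k).length := by
              have := hεpre.length_le
              simp only [List.length_append, List.length_singleton] at this
              omega
            simp only [joinBox, expandBox, Function.update_self, List.length_append,
              List.length_singleton]
            rw [if_neg (show ¬ (y k).length ≤ (b k).length by omega)]
            split_ifs with h2
            · exact hεpre.eq_of_length_le (by simpa using h2)
            · rfl
          · simp only [joinBox, expandBox, Function.update_of_ne hne]
        have hmain : traceOn (insert (expandBox i false b) (insert (expandBox i true b)
            (A.erase b))) y = traceOn A y := by
          cases ε
          · rw [traceOn_insert_pos hcε, traceOn_insert_neg (by simpa using hcnε),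
              traceOn_erase hA hb hc, hjε, Finset.insert_erase (mem_traceOn_self hb hc)]
          · rw [traceOn_insert_neg (by simpa using hcnε), traceOn_insert_pos hcε,
              traceOn_erase hA hb hc, hjε, Finset.insert_erase (mem_traceOn_self hb hc)]
        rw [hmain]
        exact Relation.ReflTransGen.refl
  · have h0 : ∀ ε : Bool, ¬ Compat y (expandBox i ε b) :=
      fun ε h' => hc (compat_of_compat_expand h')
    rw [traceOn_insert_neg (h0 false), traceOn_insert_neg (h0 true), traceOn_erase_neg hc]
    exact Relation.ReflTransGen.refl

lemma traceOn_expands {A B : Finset (Box s)} (hA : PI A) (h : Expands A B) (y : Box s) :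
    Expands (traceOn A y) (traceOn B y) := by
  induction h with
  | refl => exact Relation.ReflTransGen.refl
  | tail h1 h2 ih => exact ih.trans (traceOn_step (PI_expands h1 hA) h2 y)

lemma trace_of_admissible {Z : Finset (Box s)} (hZ : Admissible Z) (y : Box s) :
    Expands {y} (traceOn Z y) := by
  have h := traceOn_expands PI_trivial hZ y
  rwa [traceOn_trivial] at h

lemma expands_biUnion (F : Box s → Finset (Box s)) :
    ∀ Y : Finset (Box s), PI Y → (∀ y ∈ Y, Expands {y} (F y)) → Expands Y (Y.biUnion F) := by
  classical
  intro Y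
  induction Y using Finset.induction_on with
  | empty =>
    intro _ _
    rw [Finset.biUnion_empty]
    exact Relation.ReflTransGen.refl
  | @insert y Y' hyY ih =>
    intro hPI hF
    have hPI' : PI Y' := fun a ha b hb =>
      hPI a (Finset.mem_insert_of_mem ha) b (Finset.mem_insert_of_mem hb)
    have hy : Expands {y} (F y) := hF y (Finset.mem_insert_self _ _)
    have hFy_le : ∀ x ∈ F y, BoxLE y x := by
      intro x hx
      obtain ⟨a, ha, hle⟩ := expands_boxLE hy x hx
      rw [Finset.mem_singleton] at ha
      subst ha
      exact hle
    have step1 : Expands (insert y Y') (F y ∪ Y') := by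
      have hdis : ∀ a ∈ ({y} : Finset (Box s)), ∀ c ∈ Y', ¬ Compat a c := by
        intro a ha c hc
        rw [Finset.mem_singleton] at ha
        subst ha
        exact hPI a (Finset.mem_insert_self _ _) c (Finset.mem_insert_of_mem hc)
          (fun h => hyY (h ▸ hc))
      have := glue Y' hy hdis
      rwa [← Finset.insert_eq] at this
    have step2 : Expands (Y' ∪ F y) (Y'.biUnion F ∪ F y) := by
      apply glue (F y) (ih hPI' (fun z hz => hF z (Finset.mem_insert_of_mem hz)))
      intro a ha c hc hcc
      have hay : a ≠ y := fun h => hyY (h ▸ ha)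
      apply hPI a (Finset.mem_insert_of_mem ha) y (Finset.mem_insert_self _ _) hay
      exact compat_symm (compat_mono (hFy_le c hc) (compat_symm hcc))
    have step2' : Expands (F y ∪ Y') ((insert y Y').biUnion F) := by
      rw [Finset.union_comm (F y) Y', Finset.biUnion_insert, Finset.union_comm (F y)]
      exact step2
    exact step1.trans step2'

theorem exists_least_upper_bound' (s : ℕ)
    (Y Z : Finset (Box s)) (hY : Admissible Y) (hZ : Admissible Z) :
    ∃ T : Finset (Box s), Admissible T ∧ Expands Y T ∧ Expands Z T ∧
      ∀ S : Finset (Box s), Admissible S → Expands Y S → Expands Z S → Expands T S := by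
  classical
  set T : Finset (Box s) := Y.biUnion (fun y => traceOn Z y) with hTdef
  have hYT : Expands Y T :=
    expands_biUnion _ Y (adm_PI hY) (fun y _ => trace_of_admissible hZ y)
  have hTsymm : T = Z.biUnion (fun z => traceOn Y z) := by
    ext x
    simp only [hTdef, Finset.mem_biUnion, mem_traceOn]
    constructor
    · rintro ⟨y, hy, b, hb, hcb, rfl⟩
      exact ⟨b, hb, y, hy, compat_symm hcb, (joinBox_comm hcb).symm⟩
    · rintro ⟨z, hz, b, hb, hcb, rfl⟩
      exact ⟨b, hb, z, hz, compat_symm hcb, (joinBox_comm hcb).symm⟩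
  have hZT : Expands Z T := by
    rw [hTsymm]
    exact expands_biUnion _ Z (adm_PI hZ) (fun z _ => trace_of_admissible hY z)
  have hTadm : Admissible T := hY.trans hYT
  have hPIT : PI T := adm_PI hTadm
  refine ⟨T, hTadm, hYT, hZT, ?_⟩
  intro S hS hYS hZS
  -- every box of S lies in a box of T
  have hrefS : ∀ x ∈ S, ∃ t ∈ T, BoxLE t x := by
    intro x hx
    obtain ⟨y, hy, h1⟩ := expands_boxLE hYS x hx
    obtain ⟨z, hz, h2⟩ := expands_boxLE hZS x hx
    have hcyz : Compat y z := compat_of_common h1 h2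
    refine ⟨joinBox y z, ?_, boxLE_joinBox h1 h2⟩
    rw [hTdef]
    exact Finset.mem_biUnion.mpr ⟨y, hy, mem_traceOn_self hz hcyz⟩
  have hTS' : T.biUnion (fun t => traceOn S t) = S := by
    ext x
    simp only [Finset.mem_biUnion, mem_traceOn]
    constructor
    · rintro ⟨t, htT, c, hcS, hcc, rfl⟩
      obtain ⟨t', ht', hle⟩ := hrefS c hcS
      have htt : t' = t := by
        by_contra hne
        exact hPIT t' ht' t htT hne (compat_mono hle (compat_symm hcc))
      subst htt
      rwa [joinBox_of_boxLE hle]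
    · intro hx
      obtain ⟨t', ht', hle⟩ := hrefS x hx
      exact ⟨t', ht', x, hx, compat_of_boxLE hle, joinBox_of_boxLE hle⟩
  have : Expands T (T.biUnion (fun t => traceOn S t)) :=
    expands_biUnion _ T hPIT (fun t _ => trace_of_admissible hS t)
  rwa [hTS'] at this

end Aux

/-- any two admissible partitions of `C^s` have a least upper bound in the
poset `𝔄`; in particular `𝔄` is directed. -/
theorem exists_least_upper_bound (s : ℕ) (hs : 1 ≤ s)
    (Y Z : Finset (Box s)) (hY : Admissible Y) (hZ : Admissible Z) :
    ∃ T : Finset (Box s), Admissible T ∧ Expands Y T ∧ Expands Z T ∧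
      ∀ S : Finset (Box s), Admissible S → Expands Y S → Expands Z S → Expands T S :=
  exists_least_upper_bound' s Y Z hY hZ

end BrinThompson
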